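/- Under the rank condition, with Ȳ := [Y, X₁] and N₂ := I_T − M₁Y B₂: M₁(y − Yβ̂) = M̄[Ȳ]y = M₁M̄[M₁Y]y = M̄[M₁Y](M₁y); M(y − Yβ̂) = M·M̄[M₁Y](M₁y); N₁(y − Yβ̃) = M̄[N₁Y]·N₁y; and M₁(y − Yβ̃) = N₂(M₁y). -/

import Mathlib

open Matrix

variable {T G k₁ k₂ : ℕ}

/-- Orthogonal projection `P̄[A] = A(AᵀA)⁻¹Aᵀ` onto the column space of `A`. -/
noncomputable def projM {n : Type*} [Fintype n] [DecidableEq n]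
    (A : Matrix (Fin T) n ℝ) : Matrix (Fin T) (Fin T) ℝ :=
  A * (Aᵀ * A)⁻¹ * Aᵀ

/-- The annihilator `M̄[A] = I - P̄[A]`. -/
noncomputable def annM {n : Type*} [Fintype n] [DecidableEq n]
    (A : Matrix (Fin T) n ℝ) : Matrix (Fin T) (Fin T) ℝ :=
  1 - projM A

noncomputable def M1 (X₁ : Matrix (Fin T) (Fin k₁) ℝ) : Matrix (Fin T) (Fin T) ℝ :=
  annM X₁

noncomputable def Pm (X₁ : Matrix (Fin T) (Fin k₁) ℝ) (X₂ : Matrix (Fin T) (Fin k₂) ℝ) :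
    Matrix (Fin T) (Fin T) ℝ :=
  projM (fromCols X₁ X₂)

noncomputable def Mm (X₁ : Matrix (Fin T) (Fin k₁) ℝ) (X₂ : Matrix (Fin T) (Fin k₂) ℝ) :
    Matrix (Fin T) (Fin T) ℝ :=
  annM (fromCols X₁ X₂)

noncomputable def N1 (X₁ : Matrix (Fin T) (Fin k₁) ℝ) (X₂ : Matrix (Fin T) (Fin k₂) ℝ) :
    Matrix (Fin T) (Fin T) ℝ :=
  M1 X₁ * Pm X₁ X₂

noncomputable def B1 (Y : Matrix (Fin T) (Fin G) ℝ) (X₁ : Matrix (Fin T) (Fin k₁) ℝ) :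
    Matrix (Fin G) (Fin T) ℝ :=
  (Yᵀ * M1 X₁ * Y)⁻¹ * (Yᵀ * M1 X₁)

noncomputable def B2 (Y : Matrix (Fin T) (Fin G) ℝ) (X₁ : Matrix (Fin T) (Fin k₁) ℝ)
    (X₂ : Matrix (Fin T) (Fin k₂) ℝ) : Matrix (Fin G) (Fin T) ℝ :=
  (Yᵀ * N1 X₁ X₂ * Y)⁻¹ * (Yᵀ * N1 X₁ X₂)

noncomputable def C1 (Y : Matrix (Fin T) (Fin G) ℝ) (X₁ : Matrix (Fin T) (Fin k₁) ℝ)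
    (X₂ : Matrix (Fin T) (Fin k₂) ℝ) : Matrix (Fin G) (Fin T) ℝ :=
  B2 Y X₁ X₂ - B1 Y X₁

/-- OLS estimator `β̂`. -/
noncomputable def betaOLS (y : Fin T → ℝ) (Y : Matrix (Fin T) (Fin G) ℝ)
    (X₁ : Matrix (Fin T) (Fin k₁) ℝ) : Fin G → ℝ :=
  B1 Y X₁ *ᵥ y

/-- 2SLS estimator `β̃`. -/
noncomputable def beta2S (y : Fin T → ℝ) (Y : Matrix (Fin T) (Fin G) ℝ)
    (X₁ : Matrix (Fin T) (Fin k₁) ℝ) (X₂ : Matrix (Fin T) (Fin k₂) ℝ) : Fin G → ℝ :=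
  B2 Y X₁ X₂ *ᵥ y

noncomputable def OmIV (Y : Matrix (Fin T) (Fin G) ℝ) (X₁ : Matrix (Fin T) (Fin k₁) ℝ)
    (X₂ : Matrix (Fin T) (Fin k₂) ℝ) : Matrix (Fin G) (Fin G) ℝ :=
  (T : ℝ)⁻¹ • (Yᵀ * N1 X₁ X₂ * Y)

noncomputable def OmLS (Y : Matrix (Fin T) (Fin G) ℝ) (X₁ : Matrix (Fin T) (Fin k₁) ℝ) :
    Matrix (Fin G) (Fin G) ℝ :=
  (T : ℝ)⁻¹ • (Yᵀ * M1 X₁ * Y)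

noncomputable def SigV (Y : Matrix (Fin T) (Fin G) ℝ) (X₁ : Matrix (Fin T) (Fin k₁) ℝ)
    (X₂ : Matrix (Fin T) (Fin k₂) ℝ) : Matrix (Fin G) (Fin G) ℝ :=
  (T : ℝ)⁻¹ • (Yᵀ * Mm X₁ X₂ * Y)

noncomputable def Dhat (Y : Matrix (Fin T) (Fin G) ℝ) (X₁ : Matrix (Fin T) (Fin k₁) ℝ)
    (X₂ : Matrix (Fin T) (Fin k₂) ℝ) : Matrix (Fin G) (Fin G) ℝ :=
  (OmIV Y X₁ X₂)⁻¹ - (OmLS Y X₁)⁻¹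

noncomputable def Psi0 (Y : Matrix (Fin T) (Fin G) ℝ) (X₁ : Matrix (Fin T) (Fin k₁) ℝ)
    (X₂ : Matrix (Fin T) (Fin k₂) ℝ) : Matrix (Fin T) (Fin T) ℝ :=
  (C1 Y X₁ X₂)ᵀ * (Dhat Y X₁ X₂)⁻¹ * C1 Y X₁ X₂

noncomputable def N2 (Y : Matrix (Fin T) (Fin G) ℝ) (X₁ : Matrix (Fin T) (Fin k₁) ℝ)
    (X₂ : Matrix (Fin T) (Fin k₂) ℝ) : Matrix (Fin T) (Fin T) ℝ :=
  1 - M1 X₁ * Y * B2 Y X₁ X₂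

noncomputable def Lam1 (Y : Matrix (Fin T) (Fin G) ℝ) (X₁ : Matrix (Fin T) (Fin k₁) ℝ)
    (X₂ : Matrix (Fin T) (Fin k₂) ℝ) : Matrix (Fin T) (Fin T) ℝ :=
  (T : ℝ)⁻¹ • (N1 X₁ X₂ * annM (N1 X₁ X₂ * Y) * N1 X₁ X₂)

noncomputable def Lam2 (Y : Matrix (Fin T) (Fin G) ℝ) (X₁ : Matrix (Fin T) (Fin k₁) ℝ)
    (X₂ : Matrix (Fin T) (Fin k₂) ℝ) : Matrix (Fin T) (Fin T) ℝ :=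
  M1 X₁ * ((T : ℝ)⁻¹ • annM (M1 X₁ * Y) - Psi0 Y X₁ X₂) * M1 X₁

noncomputable def Lam3 (Y : Matrix (Fin T) (Fin G) ℝ) (X₁ : Matrix (Fin T) (Fin k₁) ℝ)
    (X₂ : Matrix (Fin T) (Fin k₂) ℝ) : Matrix (Fin T) (Fin T) ℝ :=
  (T : ℝ)⁻¹ • (M1 X₁ * (N2 Y X₁ X₂)ᵀ * N2 Y X₁ X₂ * M1 X₁)

noncomputable def Lam4 (Y : Matrix (Fin T) (Fin G) ℝ) (X₁ : Matrix (Fin T) (Fin k₁) ℝ) :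
    Matrix (Fin T) (Fin T) ℝ :=
  (T : ℝ)⁻¹ • (M1 X₁ * annM (M1 X₁ * Y) * M1 X₁)

def Ybar (Y : Matrix (Fin T) (Fin G) ℝ) (X₁ : Matrix (Fin T) (Fin k₁) ℝ) :
    Matrix (Fin T) (Fin G ⊕ Fin k₁) ℝ :=
  fromCols Y X₁

def Zfull (Y : Matrix (Fin T) (Fin G) ℝ) (X₁ : Matrix (Fin T) (Fin k₁) ℝ)
    (X₂ : Matrix (Fin T) (Fin k₂) ℝ) : Matrix (Fin T) (Fin G ⊕ (Fin k₁ ⊕ Fin k₂)) ℝ :=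
  fromCols Y (fromCols X₁ X₂)

noncomputable def PsiR (Y : Matrix (Fin T) (Fin G) ℝ) (X₁ : Matrix (Fin T) (Fin k₁) ℝ)
    (X₂ : Matrix (Fin T) (Fin k₂) ℝ) : Matrix (Fin T) (Fin T) ℝ :=
  (T : ℝ)⁻¹ • (annM (Ybar Y X₁) - annM (Zfull Y X₁ X₂))

noncomputable def LamR (Y : Matrix (Fin T) (Fin G) ℝ) (X₁ : Matrix (Fin T) (Fin k₁) ℝ)
    (X₂ : Matrix (Fin T) (Fin k₂) ℝ) : Matrix (Fin T) (Fin T) ℝ :=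
  (T : ℝ)⁻¹ • annM (Zfull Y X₁ X₂)

/-- `σ̂² = (1/T)(y−Yβ̂)ᵀM₁(y−Yβ̂)`. -/
noncomputable def sigHat2 (y : Fin T → ℝ) (Y : Matrix (Fin T) (Fin G) ℝ)
    (X₁ : Matrix (Fin T) (Fin k₁) ℝ) : ℝ :=
  (T : ℝ)⁻¹ * ((y - Y *ᵥ betaOLS y Y X₁) ⬝ᵥ (M1 X₁ *ᵥ (y - Y *ᵥ betaOLS y Y X₁)))

/-- `σ̃² = (1/T)(y−Yβ̃)ᵀM₁(y−Yβ̃)`. -/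
noncomputable def sigTil2 (y : Fin T → ℝ) (Y : Matrix (Fin T) (Fin G) ℝ)
    (X₁ : Matrix (Fin T) (Fin k₁) ℝ) (X₂ : Matrix (Fin T) (Fin k₂) ℝ) : ℝ :=
  (T : ℝ)⁻¹ * ((y - Y *ᵥ beta2S y Y X₁ X₂) ⬝ᵥ (M1 X₁ *ᵥ (y - Y *ᵥ beta2S y Y X₁ X₂)))

/-- `σ̃₁² = (1/T)(y−Yβ̃)ᵀN₁(y−Yβ̃)`. -/
noncomputable def sigTil1sq (y : Fin T → ℝ) (Y : Matrix (Fin T) (Fin G) ℝ)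
    (X₁ : Matrix (Fin T) (Fin k₁) ℝ) (X₂ : Matrix (Fin T) (Fin k₂) ℝ) : ℝ :=
  (T : ℝ)⁻¹ * ((y - Y *ᵥ beta2S y Y X₁ X₂) ⬝ᵥ (N1 X₁ X₂ *ᵥ (y - Y *ᵥ beta2S y Y X₁ X₂)))

/-- `σ̃₂² = σ̂² − (β̃−β̂)ᵀΔ̂⁻¹(β̃−β̂)`. -/
noncomputable def sigTil2sq (y : Fin T → ℝ) (Y : Matrix (Fin T) (Fin G) ℝ)
    (X₁ : Matrix (Fin T) (Fin k₁) ℝ) (X₂ : Matrix (Fin T) (Fin k₂) ℝ) : ℝ :=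
  sigHat2 y Y X₁ -
    (beta2S y Y X₁ X₂ - betaOLS y Y X₁) ⬝ᵥ
      ((Dhat Y X₁ X₂)⁻¹ *ᵥ (beta2S y Y X₁ X₂ - betaOLS y Y X₁))

/-- The rank condition: `X₁`, `X = [X₁, X₂]`, `[Y, X]` and `[P̄[X]Y, X₁]` all have
full column rank. -/
def RankCond (Y : Matrix (Fin T) (Fin G) ℝ) (X₁ : Matrix (Fin T) (Fin k₁) ℝ)
    (X₂ : Matrix (Fin T) (Fin k₂) ℝ) : Prop :=
  X₁.rank = k₁ ∧ (fromCols X₁ X₂).rank = k₁ + k₂ ∧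
    (fromCols Y (fromCols X₁ X₂)).rank = G + (k₁ + k₂) ∧
    (fromCols (Pm X₁ X₂ * Y) X₁).rank = G + k₁


section AuxLemmas

open Matrix

variable {T : ℕ}

private lemma isUnit_of_rank_eq_card {n : Type} [Fintype n] [DecidableEq n]
    (A : Matrix n n ℝ) (h : A.rank = Fintype.card n) : IsUnit A := by
  rw [← Matrix.mulVec_injective_iff_isUnit]
  have hsurj : Function.Surjective A.mulVecLin := by
    rw [← LinearMap.range_eq_top]
    apply Submodule.eq_top_of_finrank_eq
    rw [Module.finrank_fintype_fun_eq_card]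
    exact h
  have hinj := (LinearMap.injective_iff_surjective).mpr hsurj
  rwa [show (A.mulVecLin : (n → ℝ) → (n → ℝ)) = A.mulVec from funext fun v => A.mulVecLin_apply v]
    at hinj

private lemma gram_isUnit {n : Type} [Fintype n] [DecidableEq n]
    (A : Matrix (Fin T) n ℝ) (h : A.rank = Fintype.card n) : IsUnit (Aᵀ * A) :=
  isUnit_of_rank_eq_card _ (by rw [Matrix.rank_transpose_mul_self, h])

private lemma mulVec_eq_zero_of_gram {n : Type} [Fintype n] [DecidableEq n]
    {A : Matrix (Fin T) n ℝ} (h : IsUnit (Aᵀ * A)) {v : n → ℝ} (hv : A *ᵥ v = 0) : v = 0 := by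
  have hinj := Matrix.mulVec_injective_iff_isUnit.mpr h
  have h0 : (Aᵀ * A) *ᵥ v = (Aᵀ * A) *ᵥ 0 := by
    rw [Matrix.mulVec_zero, ← Matrix.mulVec_mulVec, hv, Matrix.mulVec_zero]
  exact hinj h0

private lemma gram_isUnit_of_ker {n : Type} [Fintype n] [DecidableEq n]
    (A : Matrix (Fin T) n ℝ) (h : ∀ v, A *ᵥ v = 0 → v = 0) : IsUnit (Aᵀ * A) := by
  rw [← Matrix.mulVec_injective_iff_isUnit]
  intro u v huv
  have h0 : (Aᵀ * A) *ᵥ (u - v) = 0 := by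
    rw [Matrix.mulVec_sub, huv, sub_self]
  have hd : (A *ᵥ (u - v)) ⬝ᵥ (A *ᵥ (u - v)) = 0 := by
    have : (u - v) ⬝ᵥ ((Aᵀ * A) *ᵥ (u - v)) = 0 := by rw [h0, dotProduct_zero]
    rwa [← Matrix.mulVec_mulVec, Matrix.dotProduct_mulVec, Matrix.vecMul_transpose] at this
  have hA : A *ᵥ (u - v) = 0 := dotProduct_self_eq_zero.mp hd
  have := h _ hA
  exact sub_eq_zero.mp this

private lemma projM_symm {n : Type} [Fintype n] [DecidableEq n] (A : Matrix (Fin T) n ℝ) :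
    (projM A)ᵀ = projM A := by
  simp [projM, Matrix.transpose_mul, Matrix.transpose_nonsing_inv, Matrix.mul_assoc]

private lemma projM_mul {n : Type} [Fintype n] [DecidableEq n] (A : Matrix (Fin T) n ℝ)
    (h : IsUnit (Aᵀ * A)) : projM A * A = A := by
  have hdet : IsUnit (Aᵀ * A).det := (Matrix.isUnit_iff_isUnit_det _).mp h
  rw [projM, Matrix.mul_assoc (A * (Aᵀ * A)⁻¹) Aᵀ A, Matrix.mul_assoc A (Aᵀ * A)⁻¹ (Aᵀ * A),
    Matrix.nonsing_inv_mul _ hdet, Matrix.mul_one]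

private lemma projM_idem {n : Type} [Fintype n] [DecidableEq n] (A : Matrix (Fin T) n ℝ)
    (h : IsUnit (Aᵀ * A)) : projM A * projM A = projM A := by
  have hdet : IsUnit (Aᵀ * A).det := (Matrix.isUnit_iff_isUnit_det _).mp h
  simp only [projM, Matrix.mul_assoc]
  rw [← Matrix.mul_assoc Aᵀ A, ← Matrix.mul_assoc (Aᵀ * A), Matrix.mul_nonsing_inv _ hdet,
    Matrix.one_mul]

/-- `W * M̄[WY] = M̄[WY] * W = W − WY(YᵀWY)⁻¹YᵀW` for symmetric idempotent `W`. -/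
private lemma annM_aux {g : ℕ} (W : Matrix (Fin T) (Fin T) ℝ) (Y : Matrix (Fin T) (Fin g) ℝ)
    (hs : Wᵀ = W) (hi : W * W = W) :
    W * annM (W * Y) = W - W * (Y * ((Yᵀ * W * Y)⁻¹ * (Yᵀ * W))) ∧
    annM (W * Y) * W = W - W * (Y * ((Yᵀ * W * Y)⁻¹ * (Yᵀ * W))) := by
  have hgT : (W * Y)ᵀ = Yᵀ * W := by rw [Matrix.transpose_mul, hs]
  have hg : (W * Y)ᵀ * (W * Y) = Yᵀ * W * Y := by
    rw [hgT, Matrix.mul_assoc, ← Matrix.mul_assoc W W Y, hi, ← Matrix.mul_assoc]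
  have hi' : ∀ Z : Matrix (Fin T) (Fin T) ℝ, W * (W * Z) = W * Z := fun Z => by
    rw [← Matrix.mul_assoc, hi]
  constructor
  · rw [annM, projM, hg, hgT, Matrix.mul_sub, Matrix.mul_one]
    congr 1
    rw [Matrix.mul_assoc (W * Y), Matrix.mul_assoc W Y, hi']
  · rw [annM, projM, hg, hgT, Matrix.sub_mul, Matrix.one_mul]
    congr 1
    rw [Matrix.mul_assoc (W * Y * (Yᵀ * W * Y)⁻¹) (Yᵀ * W) W, Matrix.mul_assoc Yᵀ W W, hi,
      Matrix.mul_assoc (W * Y), Matrix.mul_assoc W Y]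

end AuxLemmas

/-- Under the rank condition, with `Ȳ = [Y, X₁]` and `N₂ = I_T − M₁YB₂`:
`M₁(y − Yβ̂) = M̄[Ȳ]y = M₁M̄[M₁Y]y = M̄[M₁Y](M₁y)`;
`M(y − Yβ̂) = M·M̄[M₁Y](M₁y)`; `N₁(y − Yβ̃) = M̄[N₁Y]·N₁y`; and
`M₁(y − Yβ̃) = N₂(M₁y)`. -/
theorem stmt7 {T G k₁ k₂ : ℕ}
    (hT : 0 < T) (hG : 0 < G) (hk₁ : 0 < k₁) (hk₂ : 0 < k₂)
    (y : Fin T → ℝ) (Y : Matrix (Fin T) (Fin G) ℝ)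
    (X₁ : Matrix (Fin T) (Fin k₁) ℝ) (X₂ : Matrix (Fin T) (Fin k₂) ℝ)
    (hrank : RankCond Y X₁ X₂) :
    M1 X₁ *ᵥ (y - Y *ᵥ betaOLS y Y X₁) = annM (Ybar Y X₁) *ᵥ y ∧
    M1 X₁ *ᵥ (y - Y *ᵥ betaOLS y Y X₁) = (M1 X₁ * annM (M1 X₁ * Y)) *ᵥ y ∧
    M1 X₁ *ᵥ (y - Y *ᵥ betaOLS y Y X₁) = annM (M1 X₁ * Y) *ᵥ (M1 X₁ *ᵥ y) ∧
    Mm X₁ X₂ *ᵥ (y - Y *ᵥ betaOLS y Y X₁)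
      = (Mm X₁ X₂ * annM (M1 X₁ * Y)) *ᵥ (M1 X₁ *ᵥ y) ∧
    N1 X₁ X₂ *ᵥ (y - Y *ᵥ beta2S y Y X₁ X₂)
      = annM (N1 X₁ X₂ * Y) *ᵥ (N1 X₁ X₂ *ᵥ y) ∧
    M1 X₁ *ᵥ (y - Y *ᵥ beta2S y Y X₁ X₂) = N2 Y X₁ X₂ *ᵥ (M1 X₁ *ᵥ y) := by
  obtain ⟨h1, h2, h3, h4⟩ := hrank
  -- Units of Gram matrices
  have hD : IsUnit (X₁ᵀ * X₁) := gram_isUnit X₁ (by simpa using h1)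
  have hXu : IsUnit ((fromCols X₁ X₂)ᵀ * fromCols X₁ X₂) :=
    gram_isUnit _ (by simpa using h2)
  have hZu : IsUnit ((Zfull Y X₁ X₂)ᵀ * Zfull Y X₁ X₂) :=
    gram_isUnit _ (by simpa [Zfull] using h3)
  have hYbarU : IsUnit ((Ybar Y X₁)ᵀ * Ybar Y X₁) := by
    apply gram_isUnit_of_ker
    intro v hv
    have hv' : v = Sum.elim (fun i => v (Sum.inl i)) (fun j => v (Sum.inr j)) := by
      funext x; cases x <;> rfl
    have hYX : Y *ᵥ (fun i => v (Sum.inl i)) + X₁ *ᵥ (fun j => v (Sum.inr j)) = 0 := by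
      rw [← Matrix.fromCols_mulVec_sumElim, ← hv']
      exact hv
    have hz : Zfull Y X₁ X₂ *ᵥ
        Sum.elim (fun i => v (Sum.inl i)) (Sum.elim (fun j => v (Sum.inr j)) 0) = 0 := by
      simp only [Zfull, Matrix.fromCols_mulVec_sumElim, Matrix.mulVec_zero, add_zero]
      exact hYX
    have h0 := mulVec_eq_zero_of_gram hZu hz
    rw [hv']
    funext x
    cases x with
    | inl i => simpa using congrFun h0 (Sum.inl i)
    | inr j => simpa using congrFun h0 (Sum.inr (Sum.inl j))
  -- Projector facts
  have hP₁s : (projM X₁)ᵀ = projM X₁ := projM_symm X₁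
  have hP₁i : projM X₁ * projM X₁ = projM X₁ := projM_idem X₁ hD
  have hPs : (projM (fromCols X₁ X₂))ᵀ = projM (fromCols X₁ X₂) := projM_symm _
  have hPi : projM (fromCols X₁ X₂) * projM (fromCols X₁ X₂) = projM (fromCols X₁ X₂) :=
    projM_idem _ hXu
  have hPX : projM (fromCols X₁ X₂) * fromCols X₁ X₂ = fromCols X₁ X₂ :=
    projM_mul _ hXu
  have hPX₁ : projM (fromCols X₁ X₂) * X₁ = X₁ := by
    rw [Matrix.mul_fromCols] at hPX
    exact ((Matrix.fromCols_ext_iff _ _ _ _).mp hPX).1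
  have hPP₁ : projM (fromCols X₁ X₂) * projM X₁ = projM X₁ := by
    rw [show projM X₁ = X₁ * ((X₁ᵀ * X₁)⁻¹ * X₁ᵀ) from by rw [projM, Matrix.mul_assoc],
      ← Matrix.mul_assoc, hPX₁]
  have hP₁P : projM X₁ * projM (fromCols X₁ X₂) = projM X₁ := by
    have h := congrArg Matrix.transpose hPP₁
    rwa [Matrix.transpose_mul, hP₁s, hPs] at h
  have hM1s : (M1 X₁)ᵀ = M1 X₁ := by
    rw [M1, annM, Matrix.transpose_sub, Matrix.transpose_one, hP₁s]
  have hM1i : M1 X₁ * M1 X₁ = M1 X₁ := by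
    simp only [M1, annM, Matrix.sub_mul, Matrix.mul_sub, Matrix.one_mul, Matrix.mul_one, hP₁i]
    abel
  have hN1 : N1 X₁ X₂ = projM (fromCols X₁ X₂) - projM X₁ := by
    simp only [N1, Pm, M1, annM, Matrix.sub_mul, Matrix.one_mul, hP₁P]
  have hN1s : (N1 X₁ X₂)ᵀ = N1 X₁ X₂ := by
    rw [hN1, Matrix.transpose_sub, hPs, hP₁s]
  have hN1i : N1 X₁ X₂ * N1 X₁ X₂ = N1 X₁ X₂ := by
    simp only [hN1, Matrix.sub_mul, Matrix.mul_sub, hPi, hP₁i, hPP₁, hP₁P]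
    abel
  have hN1M1 : N1 X₁ X₂ * M1 X₁ = N1 X₁ X₂ := by
    simp only [hN1, M1, annM, Matrix.sub_mul, Matrix.mul_sub, Matrix.mul_one, hPP₁, hP₁i]
    abel
  have hMM1 : Mm X₁ X₂ * M1 X₁ = Mm X₁ X₂ := by
    simp only [Mm, M1, annM, Matrix.sub_mul, Matrix.mul_sub, Matrix.one_mul, Matrix.mul_one, hPP₁]
    abel
  -- vector-level conversion
  have conv : ∀ (W : Matrix (Fin T) (Fin T) ℝ) (B : Matrix (Fin G) (Fin T) ℝ),
      W *ᵥ (y - Y *ᵥ (B *ᵥ y)) = (W - W * (Y * B)) *ᵥ y := by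
    intro W B
    simp only [Matrix.mulVec_sub, Matrix.sub_mulVec, ← Matrix.mulVec_mulVec, Matrix.mul_assoc]
  -- block Gram inverse pieces for goal 1
  have hDdet : IsUnit (X₁ᵀ * X₁).det := (Matrix.isUnit_iff_isUnit_det _).mp hD
  haveI iD : Invertible (X₁ᵀ * X₁) := (X₁ᵀ * X₁).invertibleOfIsUnitDet hDdet
  have hSchurEq : Yᵀ * Y - Yᵀ * X₁ * ⅟(X₁ᵀ * X₁) * (X₁ᵀ * Y) = Yᵀ * M1 X₁ * Y := by
    rw [Matrix.invOf_eq_nonsing_inv]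
    simp only [M1, annM, projM, Matrix.mul_sub, Matrix.sub_mul, Matrix.mul_one,
      Matrix.one_mul, Matrix.mul_assoc]
  have hYbarGram : (Ybar Y X₁)ᵀ * Ybar Y X₁
      = fromBlocks (Yᵀ * Y) (Yᵀ * X₁) (X₁ᵀ * Y) (X₁ᵀ * X₁) := by
    rw [Ybar, Matrix.transpose_fromCols, Matrix.fromRows_mul_fromCols]
  have hSu : IsUnit (Yᵀ * M1 X₁ * Y) := by
    have hdet := (Matrix.isUnit_iff_isUnit_det _).mp hYbarU
    rw [hYbarGram, Matrix.det_fromBlocks₂₂, hSchurEq] at hdet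
    exact (Matrix.isUnit_iff_isUnit_det _).mpr (isUnit_of_mul_isUnit_right hdet)
  haveI iS : Invertible (Yᵀ * Y - Yᵀ * X₁ * ⅟(X₁ᵀ * X₁) * (X₁ᵀ * Y)) := by
    rw [hSchurEq]
    exact (Yᵀ * M1 X₁ * Y).invertibleOfIsUnitDet ((Matrix.isUnit_iff_isUnit_det _).mp hSu)
  haveI iGb : Invertible (fromBlocks (Yᵀ * Y) (Yᵀ * X₁) (X₁ᵀ * Y) (X₁ᵀ * X₁)) := by
    rw [← hYbarGram]
    exact ((Ybar Y X₁)ᵀ * Ybar Y X₁).invertibleOfIsUnitDet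
      ((Matrix.isUnit_iff_isUnit_det _).mp hYbarU)
  have hGraminv : ((Ybar Y X₁)ᵀ * Ybar Y X₁)⁻¹
      = fromBlocks ((Yᵀ * M1 X₁ * Y)⁻¹)
          (-((Yᵀ * M1 X₁ * Y)⁻¹ * (Yᵀ * X₁) * (X₁ᵀ * X₁)⁻¹))
          (-((X₁ᵀ * X₁)⁻¹ * (X₁ᵀ * Y) * (Yᵀ * M1 X₁ * Y)⁻¹))
          ((X₁ᵀ * X₁)⁻¹ + (X₁ᵀ * X₁)⁻¹ * (X₁ᵀ * Y) * (Yᵀ * M1 X₁ * Y)⁻¹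
            * (Yᵀ * X₁) * (X₁ᵀ * X₁)⁻¹) := by
    rw [hYbarGram, ← Matrix.invOf_eq_nonsing_inv, Matrix.invOf_fromBlocks₂₂_eq]
    rw [show ⅟(Yᵀ * Y - Yᵀ * X₁ * ⅟(X₁ᵀ * X₁) * (X₁ᵀ * Y)) = (Yᵀ * M1 X₁ * Y)⁻¹ from by
      rw [Matrix.invOf_eq_nonsing_inv, hSchurEq], Matrix.invOf_eq_nonsing_inv]
  have hProj : projM (Ybar Y X₁) = projM X₁ + M1 X₁ * (Y * B1 Y X₁) := by
    rw [projM, hGraminv, Ybar, Matrix.transpose_fromCols, Matrix.mul_assoc,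
      Matrix.fromBlocks_mul_fromRows, Matrix.fromCols_mul_fromRows]
    simp only [B1, M1, annM, projM, Matrix.mul_sub, Matrix.sub_mul, Matrix.mul_add,
      Matrix.add_mul, Matrix.mul_one, Matrix.one_mul, Matrix.mul_neg, Matrix.neg_mul,
      Matrix.mul_assoc]
    abel
  -- the six identities
  refine ⟨?_, ?_, ?_, ?_, ?_, ?_⟩
  · rw [betaOLS, conv]
    congr 1
    rw [annM, hProj]
    simp only [M1, annM]
    abel
  · rw [betaOLS, conv, (annM_aux (M1 X₁) Y hM1s hM1i).1]
    simp only [B1]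
  · rw [betaOLS, conv, Matrix.mulVec_mulVec, (annM_aux (M1 X₁) Y hM1s hM1i).2]
    simp only [B1]
  · rw [betaOLS, conv, Matrix.mulVec_mulVec]
    congr 1
    rw [Matrix.mul_assoc (Mm X₁ X₂) (annM (M1 X₁ * Y)) (M1 X₁),
      (annM_aux (M1 X₁) Y hM1s hM1i).2, Matrix.mul_sub,
      ← Matrix.mul_assoc (Mm X₁ X₂) (M1 X₁), hMM1]
    simp only [B1]
  · rw [beta2S, conv, Matrix.mulVec_mulVec, (annM_aux (N1 X₁ X₂) Y hN1s hN1i).2]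
    simp only [B2]
  · rw [beta2S, conv, Matrix.mulVec_mulVec]
    congr 1
    have hB2M1 : B2 Y X₁ X₂ * M1 X₁ = B2 Y X₁ X₂ := by
      rw [B2, Matrix.mul_assoc, Matrix.mul_assoc Yᵀ (N1 X₁ X₂) (M1 X₁), hN1M1]
    rw [N2, Matrix.sub_mul, Matrix.one_mul,
      Matrix.mul_assoc (M1 X₁ * Y) (B2 Y X₁ X₂) (M1 X₁), hB2M1, Matrix.mul_assoc]
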